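/- Let f : X → 𝒢(Z,C) be a convex function and x₀ ∈ dom f. (i) If f(x₀) is minimal in f[X] (i.e. f(x) ⊇ f(x₀) implies f(x) = f(x₀)), then x₀ solves the scalarized Minty inequality (mvi_M): for all x with f(x) ≠ f(x₀) there exists z* ∈ C⁻∖{0} with φ_{f,z*}(x) ≠ −∞ and φ′_{f,z*}(x, x₀−x) < 0. (ii) Conversely, if there is a finite set M* ⊆ C⁻∖{0} such that x₀ solves the M*-restricted Minty inequality: for all x with f(x) ≠ f(x₀) there exists z* ∈ M* with φ_{f,z*}(x) ≠ −∞ and φ′_{f,z*}(x, x₀−x) < 0, and for every x ∈ X and every z* ∈ M* the function t ↦ φ_{f,z*}(x₀ + t(x−x₀)) on [0,1] is lower semicontinuous at 0, then f(x₀) is minimal in f[X]. -/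

import Mathlib

open Set Pointwise

noncomputable section

variable {Z : Type*} [AddCommGroup Z] [Module ℝ Z] [TopologicalSpace Z]

/-- The inf-residual `A ⊖ B = {z : B + {z} ⊆ A}`. -/
def resid (A B : Set Z) : Set Z := {z : Z | B + {z} ⊆ A}

/-- The recession cone `0⁺A`, with the convention `0⁺∅ = ∅`. -/
def recCone (A : Set Z) : Set Z := {z : Z | A.Nonempty ∧ A + {z} ⊆ A}

/-- `A ⊕ B = cl (A + B)`. -/
def oplus (A B : Set Z) : Set Z := closure (A + B)

/-- Membership in `𝒢(Z,C)`: `A = cl co (A + C)`. -/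
def IsG (C A : Set Z) : Prop := A = closure (convexHull ℝ (A + C))

/-- The set `C⁻ \ {0}` of nonzero elements of the negative dual cone. -/
def negDualNZ (C : Set Z) : Set (Z →L[ℝ] ℝ) :=
  {p : Z →L[ℝ] ℝ | (∀ c ∈ C, p c ≤ 0) ∧ p ≠ 0}

/-- `inf {-z*(z) : z ∈ A}` as an extended real. -/
def scal (p : Z →L[ℝ] ℝ) (A : Set Z) : EReal :=
  sInf ((fun z => ((-(p z) : ℝ) : EReal)) '' A)

/-- Support function `σ(z*|A) = sup {z*(z) : z ∈ A}` as an extended real. -/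
def suppF (p : Z →L[ℝ] ℝ) (A : Set Z) : EReal :=
  sSup ((fun z => ((p z : ℝ) : EReal)) '' A)

/-- Inf-residuation on the extended reals: `r ⊖ s = inf {t ∈ ℝ : r ≤ s + t}`. -/
def eresid (r s : EReal) : EReal :=
  sInf ((fun t : ℝ => (t : EReal)) '' {t : ℝ | r ≤ s + (t : EReal)})

variable {X : Type*} [AddCommGroup X] [Module ℝ X]

/-- The scalarization `φ_{f,z*}(x) = inf {-z*(z) : z ∈ f(x)}`. -/
def phi (f : X → Set Z) (p : Z →L[ℝ] ℝ) (x : X) : EReal := scal p (f x)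

/-- Convexity for set-valued functions:
`f(t x₁ + (1-t) x₂) ⊇ cl (t f(x₁) + (1-t) f(x₂))`. -/
def ConvexSV (f : X → Set Z) : Prop :=
  ∀ x₁ x₂ : X, ∀ t : ℝ, t ∈ Ioo (0:ℝ) 1 →
    closure (t • f x₁ + (1 - t) • f x₂) ⊆ f (t • x₁ + (1 - t) • x₂)

/-- The set-valued directional derivative
`f′(x,u) = ⋂_{t₀>0} cl co ⋃_{0<t<t₀} (1/t)•(f(x+tu) ⊖ f(x))`. -/
def sder (f : X → Set Z) (x u : X) : Set Z :=
  ⋂ t₀ ∈ Ioi (0:ℝ), closure (convexHull ℝ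
    (⋃ t ∈ Ioo (0:ℝ) t₀, (1 / t) • resid (f (x + t • u)) (f x)))

/-- The scalar Dini derivative `φ′_{f,z*}(x,u) = inf_{t>0} (1/t)(φ(x+tu) ⊖ φ(x))`. -/
def phiDer (f : X → Set Z) (p : Z →L[ℝ] ℝ) (x u : X) : EReal :=
  ⨅ t ∈ Ioi (0:ℝ), (((1 / t : ℝ)) : EReal) * eresid (phi f p (x + t • u)) (phi f p x)

end

section Helpers

open Set Pointwise

variable {Z : Type*} [AddCommGroup Z] [Module ℝ Z] [TopologicalSpace Z]
variable {X : Type*} [AddCommGroup X] [Module ℝ X]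

lemma phi_le_of_mem (f : X → Set Z) (p : Z →L[ℝ] ℝ) {x : X} {z : Z} (hz : z ∈ f x) :
    phi f p x ≤ ((-(p z) : ℝ) : EReal) :=
  sInf_le ⟨z, hz, rfl⟩

lemma phi_lt_coe (f : X → Set Z) (p : Z →L[ℝ] ℝ) {x : X} {r : ℝ}
    (h : phi f p x < (r : EReal)) : ∃ z ∈ f x, -(p z) < r := by
  obtain ⟨b, ⟨z, hz, rfl⟩, hb⟩ := sInf_lt_iff.1 h
  have hb' : ((-(p z) : ℝ) : EReal) < (r : EReal) := hb
  exact ⟨z, hz, by exact_mod_cast hb'⟩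

lemma mem_convexSV {f : X → Set Z} (hf : ConvexSV f) {x₁ x₂ : X} {z₁ z₂ : Z} {t : ℝ}
    (ht : t ∈ Ioo (0:ℝ) 1) (h₁ : z₁ ∈ f x₁) (h₂ : z₂ ∈ f x₂) :
    t • z₁ + (1 - t) • z₂ ∈ f (t • x₁ + (1 - t) • x₂) :=
  hf x₁ x₂ t ht (subset_closure (add_mem_add (smul_mem_smul_set h₁) (smul_mem_smul_set h₂)))

lemma phi_convex_lt {f : X → Set Z} (hf : ConvexSV f) (p : Z →L[ℝ] ℝ) {x₁ x₂ : X}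
    {t r₁ r₂ : ℝ} (ht : t ∈ Ioo (0:ℝ) 1)
    (h₁ : phi f p x₁ < (r₁ : EReal)) (h₂ : phi f p x₂ < (r₂ : EReal)) :
    phi f p (t • x₁ + (1 - t) • x₂) < ((t * r₁ + (1 - t) * r₂ : ℝ) : EReal) := by
  obtain ⟨z₁, hz₁, hr₁⟩ := phi_lt_coe f p h₁
  obtain ⟨z₂, hz₂, hr₂⟩ := phi_lt_coe f p h₂
  have hle := phi_le_of_mem f p (mem_convexSV hf ht hz₁ hz₂)
  refine lt_of_le_of_lt hle ?_
  have : -(p (t • z₁ + (1 - t) • z₂)) < t * r₁ + (1 - t) * r₂ := by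
    have h1 := ht.1; have h2 := ht.2
    simp only [map_add, map_smul, smul_eq_mul]
    nlinarith
  exact_mod_cast this

/-- If `φ(y₁) < φ(y₂)`, `φ(y₂) < ⊤` and `y₂` is a strict convex combination of `y₁, y₃`,
then `φ(y₂) < φ(y₃)`. -/
lemma conv_mid_lt {f : X → Set Z} (hf : ConvexSV f) (p : Z →L[ℝ] ℝ) {y₁ y₂ y₃ : X} {l : ℝ}
    (hl : l ∈ Ioo (0:ℝ) 1) (hy : y₂ = l • y₁ + (1 - l) • y₃)
    (h12 : phi f p y₁ < phi f p y₂) (h2top : phi f p y₂ < ⊤) :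
    phi f p y₂ < phi f p y₃ := by
  by_contra hc
  push_neg at hc
  have hbot : phi f p y₂ ≠ ⊥ := fun hb => by simp [hb] at h12
  obtain ⟨m₀, hm₀⟩ : ∃ m₀ : ℝ, phi f p y₂ = (m₀ : EReal) :=
    ⟨_, (EReal.coe_toReal h2top.ne hbot).symm⟩
  obtain ⟨r₁, hr₁, hr₁'⟩ := EReal.exists_between_coe_real h12
  rw [hm₀] at hr₁' hc
  have hrm : r₁ < m₀ := by exact_mod_cast hr₁'
  set ε := l * (m₀ - r₁) / (2 * (1 - l)) with hε
  have hεpos : 0 < ε := by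
    apply div_pos (by nlinarith [hl.1, hl.2]) (by nlinarith [hl.2])
  have h₂ : phi f p y₃ < ((m₀ + ε : ℝ) : EReal) :=
    lt_of_le_of_lt hc (by exact_mod_cast (by linarith : m₀ < m₀ + ε))
  have := phi_convex_lt hf p hl hr₁ h₂
  rw [← hy, hm₀] at this
  have hfin : m₀ < l * r₁ + (1 - l) * (m₀ + ε) := by exact_mod_cast this
  have h1l : (1 : ℝ) - l ≠ 0 := ne_of_gt (by linarith [hl.2] : (0:ℝ) < 1 - l)
  have hkey : (1 - l) * ε = l * (m₀ - r₁) / 2 := by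
    rw [hε]; field_simp
  nlinarith [hl.1, hl.2]

/-- If `φ(y₃) < φ(y₁)`, `φ(y₁) < ⊤` and `y₂` is a strict convex combination of `y₁, y₃`,
then `φ(y₂) < φ(y₁)`. -/
lemma conv_down_lt {f : X → Set Z} (hf : ConvexSV f) (p : Z →L[ℝ] ℝ) {y₁ y₂ y₃ : X} {l : ℝ}
    (hl : l ∈ Ioo (0:ℝ) 1) (hy : y₂ = l • y₁ + (1 - l) • y₃)
    (h31 : phi f p y₃ < phi f p y₁) (h1top : phi f p y₁ < ⊤) :
    phi f p y₂ < phi f p y₁ := by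
  have hbot : phi f p y₁ ≠ ⊥ := fun hb => by simp [hb] at h31
  obtain ⟨m₀, hm₀⟩ : ∃ m₀ : ℝ, phi f p y₁ = (m₀ : EReal) :=
    ⟨_, (EReal.coe_toReal h1top.ne hbot).symm⟩
  obtain ⟨r₃, hr₃, hr₃'⟩ := EReal.exists_between_coe_real h31
  rw [hm₀] at hr₃'
  have hrm : r₃ < m₀ := by exact_mod_cast hr₃'
  set ε := (1 - l) * (m₀ - r₃) / (2 * l) with hε
  have hεpos : 0 < ε := by
    apply div_pos (by nlinarith [hl.1, hl.2]) (by nlinarith [hl.1])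
  have h₁ : phi f p y₁ < ((m₀ + ε : ℝ) : EReal) := by
    rw [hm₀]; exact_mod_cast (by linarith : m₀ < m₀ + ε)
  have := phi_convex_lt hf p hl h₁ hr₃
  rw [← hy] at this
  refine lt_of_lt_of_le this ?_
  rw [hm₀]
  have hl0 : l ≠ 0 := ne_of_gt hl.1
  have hkey : l * ε = (1 - l) * (m₀ - r₃) / 2 := by
    rw [hε]; field_simp
  have : l * (m₀ + ε) + (1 - l) * r₃ ≤ m₀ := by nlinarith [hl.1, hl.2]
  exact_mod_cast this

lemma eresid_le {r s : EReal} {c : ℝ} (h : r ≤ s + (c : EReal)) : eresid r s ≤ (c : EReal) :=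
  sInf_le ⟨c, h, rfl⟩

lemma coe_mul_neg {a : ℝ} (ha : 0 < a) {y : EReal} (hy : y < 0) : (a : EReal) * y < 0 := by
  induction y with
  | bot =>
      rw [EReal.coe_mul_bot_of_pos ha]
      exact EReal.bot_lt_zero
  | coe r =>
      rw [← EReal.coe_mul]
      have : r < 0 := by exact_mod_cast hy
      exact_mod_cast mul_neg_of_pos_of_neg ha this
  | top => exact absurd hy (by simp)

lemma phiDer_lt_zero_of (f : X → Set Z) (p : Z →L[ℝ] ℝ) (x u : X) {t : ℝ} (ht : t ∈ Ioi (0:ℝ))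
    (h : (((1 / t : ℝ)) : EReal) * eresid (phi f p (x + t • u)) (phi f p x) < 0) :
    phiDer f p x u < 0 :=
  lt_of_le_of_lt (iInf₂_le t ht) h

lemma exists_decrease {f : X → Set Z} {p : Z →L[ℝ] ℝ} {x u : X} {s₀ : ℝ}
    (hs : phi f p x = (s₀ : EReal)) (h : phiDer f p x u < 0) :
    ∃ t : ℝ, 0 < t ∧ phi f p (x + t • u) < phi f p x := by
  rw [phiDer, iInf_lt_iff] at h
  obtain ⟨t, ht⟩ := h
  rw [iInf_lt_iff] at ht
  obtain ⟨htpos, hlt⟩ := ht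
  rw [mem_Ioi] at htpos
  have her : eresid (phi f p (x + t • u)) (phi f p x) < 0 := by
    by_contra hge
    push_neg at hge
    have h1t : (0 : EReal) ≤ ((1 / t : ℝ) : EReal) := by
      exact_mod_cast le_of_lt (by positivity : (0:ℝ) < 1 / t)
    exact absurd hlt (not_lt.2 (mul_nonneg h1t hge))
  rw [eresid] at her
  obtain ⟨b, ⟨c, hc, rfl⟩, hb⟩ := sInf_lt_iff.1 her
  have hb' : ((c : ℝ) : EReal) < 0 := hb
  have hcneg : c < 0 := by exact_mod_cast hb'
  have hc' : phi f p (x + t • u) ≤ phi f p x + (c : EReal) := hc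
  rw [hs, ← EReal.coe_add] at hc'
  refine ⟨t, htpos, lt_of_le_of_lt hc' ?_⟩
  rw [hs]
  exact_mod_cast (by linarith : s₀ + c < s₀)

lemma Xp_comb (x₀ u : X) (a b l : ℝ) :
    l • (x₀ + a • u) + (1 - l) • (x₀ + b • u) = x₀ + (l * a + (1 - l) * b) • u := by
  module

end Helpers

theorem stmt_18
  {Z : Type*} [AddCommGroup Z] [Module ℝ Z] [TopologicalSpace Z]
  [IsTopologicalAddGroup Z] [ContinuousSMul ℝ Z] [LocallyConvexSpace ℝ Z] [T2Space Z]
  {X : Type*} [AddCommGroup X] [Module ℝ X]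
  (C : Set Z) (hCclosed : IsClosed C) (hCconv : Convex ℝ C)
  (hCcone : ∀ c ∈ C, ∀ r : ℝ, 0 < r → r • c ∈ C) (hC0 : (0:Z) ∈ C)
  (hdual : (negDualNZ C).Nonempty)
  (f : X → Set Z) (hG : ∀ x, IsG C (f x)) (hf : ConvexSV f)
  (x₀ : X) (hx₀ : (f x₀).Nonempty) :
    ((∀ x : X, f x₀ ⊆ f x → f x = f x₀) → (∀ x : X, f x ≠ f x₀ →
      ∃ p ∈ negDualNZ C, phi f p x ≠ ⊥ ∧ phiDer f p x (x₀ - x) < 0))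
    ∧ (∀ M : Set (Z →L[ℝ] ℝ), M.Finite → M ⊆ negDualNZ C →
        (∀ x : X, f x ≠ f x₀ →
          ∃ p ∈ M, phi f p x ≠ ⊥ ∧ phiDer f p x (x₀ - x) < 0) →
        (∀ x : X, ∀ p ∈ M, ∀ r : ℝ, (r : EReal) < phi f p x₀ →
          ∃ t₀ ∈ Ioc (0:ℝ) 1, ∀ t ∈ Ico (0:ℝ) t₀,
            (r : EReal) < phi f p (x₀ + t • (x - x₀))) →
        (∀ x : X, f x₀ ⊆ f x → f x = f x₀)) := by
  constructor
  · -- Part (i)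
    intro hmin x hne
    by_cases hfx : (f x).Nonempty
    · -- f x nonempty: separation
      have hnotsub : ¬ f x₀ ⊆ f x := fun h => hne (hmin x h)
      obtain ⟨zb, hzb₀, hzb⟩ := not_subset.1 hnotsub
      have hclosed : IsClosed (f x) := (hG x) ▸ isClosed_closure
      have hconv : Convex ℝ (f x) := (hG x) ▸ (convex_convexHull ℝ _).closure
      obtain ⟨p, u, hpu, hupz⟩ := geometric_hahn_banach_closed_point hconv hclosed hzb
      obtain ⟨a₀, ha₀⟩ := hfx
      have haddC : f x + C ⊆ f x := by
        intro w hw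
        rw [hG x]
        exact subset_closure (subset_convexHull ℝ _ hw)
      have hpC : ∀ c ∈ C, p c ≤ 0 := by
        intro c hc
        by_contra hpc
        push_neg at hpc
        have hu0 : 0 < u - p a₀ := by linarith [hpu a₀ ha₀]
        set r := (u - p a₀) / p c with hr
        have hrpos : 0 < r := div_pos hu0 hpc
        have hmem : a₀ + r • c ∈ f x := haddC (add_mem_add ha₀ (hCcone c hc r hrpos))
        have := hpu _ hmem
        rw [map_add, map_smul, smul_eq_mul, hr, div_mul_cancel₀ _ (ne_of_gt hpc)] at this
        linarith
      have hpne : p ≠ 0 := by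
        intro h0
        have h1 := hpu a₀ ha₀
        rw [h0] at h1 hupz
        simp at h1 hupz
        linarith
      refine ⟨p, ⟨hpC, hpne⟩, ?_, ?_⟩
      · -- phi ≠ ⊥
        intro hb
        have hge : ((-u : ℝ) : EReal) ≤ phi f p x := by
          refine le_sInf ?_
          rintro b ⟨z, hz, rfl⟩
          show ((-u : ℝ) : EReal) ≤ ((-(p z) : ℝ) : EReal)
          exact_mod_cast neg_le_neg (le_of_lt (hpu z hz))
        rw [hb] at hge
        exact absurd hge (by simp)
      · -- phiDer < 0
        have hge : ((-u : ℝ) : EReal) ≤ phi f p x := by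
          refine le_sInf ?_
          rintro b ⟨z, hz, rfl⟩
          show ((-u : ℝ) : EReal) ≤ ((-(p z) : ℝ) : EReal)
          exact_mod_cast neg_le_neg (le_of_lt (hpu z hz))
        have hnb : phi f p x ≠ ⊥ := fun hb => by rw [hb] at hge; exact absurd hge (by simp)
        have hnt : phi f p x ≠ ⊤ :=
          ne_top_of_le_ne_top (EReal.coe_ne_top _) (phi_le_of_mem f p ha₀)
        obtain ⟨c₀, hc₀⟩ : ∃ c₀ : ℝ, phi f p x = (c₀ : EReal) :=
          ⟨_, (EReal.coe_toReal hnt hnb).symm⟩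
        have hc₀u : -u ≤ c₀ := by rw [hc₀] at hge; exact_mod_cast hge
        set δ := (p zb - u) / 2 with hδ
        have hδpos : 0 < δ := by rw [hδ]; linarith
        obtain ⟨a, ha, hpa⟩ : ∃ a ∈ f x, -(p a) < c₀ + δ := by
          apply phi_lt_coe f p
          rw [hc₀]
          exact_mod_cast (by linarith : c₀ < c₀ + δ)
        have hhalf : (1/2 : ℝ) ∈ Ioo (0:ℝ) 1 := by norm_num
        have hmem := mem_convexSV hf hhalf hzb₀ ha
        have hpt : (1/2 : ℝ) • x₀ + (1 - 1/2 : ℝ) • x = x + (1/2 : ℝ) • (x₀ - x) := by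
          module
        rw [hpt] at hmem
        have hle := phi_le_of_mem f p hmem
        have hval : -(p ((1/2 : ℝ) • zb + (1 - 1/2 : ℝ) • a)) ≤ c₀ + (-(δ/2)) := by
          simp only [map_add, map_smul, smul_eq_mul]
          have hzbval : p zb = u + 2 * δ := by rw [hδ]; ring
          nlinarith
        have hphile : phi f p (x + (1/2 : ℝ) • (x₀ - x)) ≤ ((c₀ + (-(δ/2)) : ℝ) : EReal) :=
          le_trans hle (by exact_mod_cast hval)
        have heres : eresid (phi f p (x + (1/2 : ℝ) • (x₀ - x))) (phi f p x) ≤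
            ((-(δ/2) : ℝ) : EReal) := by
          apply eresid_le
          rw [hc₀, ← EReal.coe_add]
          exact hphile
        apply phiDer_lt_zero_of f p x (x₀ - x) (t := 1/2) (by norm_num)
        apply coe_mul_neg (by norm_num : (0:ℝ) < 1 / (1/2))
        refine lt_of_le_of_lt heres ?_
        exact_mod_cast (by linarith : -(δ/2) < 0)
    · -- f x empty
      obtain ⟨p, hp⟩ := hdual
      have hempty : f x = ∅ := not_nonempty_iff_eq_empty.1 hfx
      have hphit : phi f p x = ⊤ := by
        rw [phi, scal, hempty, image_empty, sInf_empty]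
      refine ⟨p, hp, by rw [hphit]; exact (by simp), ?_⟩
      apply phiDer_lt_zero_of f p x (x₀ - x) (t := 1) (by norm_num)
      apply coe_mul_neg (by norm_num : (0:ℝ) < 1 / 1)
      have heres : eresid (phi f p (x + (1:ℝ) • (x₀ - x))) (phi f p x) ≤ ((-1 : ℝ) : EReal) := by
        apply eresid_le
        rw [hphit, EReal.top_add_coe]
        exact le_top
      refine lt_of_le_of_lt heres ?_
      exact_mod_cast (by norm_num : (-1:ℝ) < 0)
  · -- Part (ii)
    intro M hMfin hMsub hmvi hlsc x hsub
    by_contra hne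
    set Xp : ℝ → X := fun t => x₀ + t • (x - x₀) with hXp
    have hX1 : Xp 1 = x := by rw [hXp]; simp
    have hX0 : Xp 0 = x₀ := by rw [hXp]; simp
    -- Step A
    have hAsub : ∀ t, 0 ≤ t → t ≤ 1 → f x₀ ⊆ f (Xp t) := by
      intro t ht0 ht1 a ha
      rcases eq_or_lt_of_le ht0 with h0 | h0
      · rwa [← h0, hX0]
      rcases eq_or_lt_of_le ht1 with h1 | h1
      · rw [h1, hX1]; exact hsub ha
      have hmem := mem_convexSV hf ⟨h0, h1⟩ (hsub ha) ha
      have h1' : t • a + (1 - t) • a = a := by module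
      have h2' : t • x + (1 - t) • x₀ = Xp t := by rw [hXp]; module
      rwa [h1', h2'] at hmem
    have hmono_phi : ∀ p : Z →L[ℝ] ℝ, ∀ t, 0 ≤ t → t ≤ 1 →
        phi f p (Xp t) ≤ phi f p x₀ := by
      intro p t ht0 ht1
      exact sInf_le_sInf (image_mono (hAsub t ht0 ht1))
    have htop : ∀ p : Z →L[ℝ] ℝ, ∀ t, 0 ≤ t → t ≤ 1 → phi f p (Xp t) < ⊤ := by
      intro p t ht0 ht1
      obtain ⟨a, ha⟩ := hx₀
      exact lt_of_le_of_lt (phi_le_of_mem f p (hAsub t ht0 ht1 ha)) (EReal.coe_lt_top _)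
    -- Step B
    have hstepB : ∀ t : ℝ, 0 < t → t ≤ 1 → f (Xp t) ≠ f x₀ →
        ∃ p ∈ M, ∃ τ : ℝ, 0 < τ ∧ τ < t ∧ phi f p (Xp τ) < phi f p (Xp t) := by
      intro t ht0 ht1 hneq
      obtain ⟨p, hpM, hpbot, hpder⟩ := hmvi (Xp t) hneq
      have htt := htop p t ht0.le ht1
      obtain ⟨s₀, hs₀⟩ : ∃ s₀ : ℝ, phi f p (Xp t) = (s₀ : EReal) :=
        ⟨_, (EReal.coe_toReal htt.ne hpbot).symm⟩
      obtain ⟨s, hspos, hsdec⟩ := exists_decrease hs₀ hpder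
      have hpt : Xp t + s • (x₀ - Xp t) = Xp (t - s * t) := by rw [hXp]; module
      rw [hpt] at hsdec
      set τ' := t - s * t with hτ'
      have hτ't : τ' < t := by rw [hτ']; nlinarith
      by_cases hτ'pos : 0 < τ'
      · exact ⟨p, hpM, τ', hτ'pos, hτ't, hsdec⟩
      · exfalso
        push_neg at hτ'pos
        have hg0 : phi f p (Xp 0) < phi f p (Xp t) := by
          rcases eq_or_lt_of_le hτ'pos with he | hlt'
          · rwa [he] at hsdec
          · -- τ' < 0
            set l := (-τ') / (t - τ') with hl
            have htτ : 0 < t - τ' := by linarith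
            have hlpos : 0 < l := div_pos (by linarith) htτ
            have hlone : l < 1 := by
              rw [hl, div_lt_one htτ]; linarith
            have hscal : l * t + (1 - l) * τ' = 0 := by
              rw [hl]; field_simp; ring
            have hy : Xp 0 = l • Xp t + (1 - l) • Xp τ' := by
              rw [hXp]
              show x₀ + (0:ℝ) • (x - x₀) = _
              rw [Xp_comb, hscal]
            exact conv_down_lt hf p ⟨hlpos, hlone⟩ hy hsdec htt
        have hup : phi f p (Xp t) ≤ phi f p (Xp 0) := by
          rw [hX0]; exact hmono_phi p t ht0.le ht1
        exact absurd (lt_of_lt_of_le hg0 hup) (lt_irrefl _)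
    -- starting point: t = 1
    have h1S : f (Xp 1) ≠ f x₀ := by rw [hX1]; exact hne
    obtain ⟨p₁, hp₁M, τ₁, hτ₁0, hτ₁1, hdec₁⟩ := hstepB 1 one_pos le_rfl h1S
    have hlt0 : phi f p₁ (Xp τ₁) < phi f p₁ (Xp 0) := by
      refine lt_of_lt_of_le hdec₁ ?_
      rw [hX0]; exact hmono_phi p₁ 1 zero_le_one le_rfl
    -- all small s are "bad"
    have hSsmall : ∀ s : ℝ, 0 < s → s ≤ τ₁ → f (Xp s) ≠ f x₀ := by
      intro s hs0 hsτ heq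
      have hlt : phi f p₁ (Xp s) < phi f p₁ (Xp 0) := by
        rcases eq_or_lt_of_le hsτ with he | hlt'
        · rw [he]; exact hlt0
        · set l := 1 - s / τ₁ with hl
          have hlpos : 0 < l := by
            rw [hl]; have : s / τ₁ < 1 := (div_lt_one hτ₁0).2 hlt'; linarith
          have hlone : l < 1 := by
            rw [hl]; have : 0 < s / τ₁ := div_pos hs0 hτ₁0; linarith
          have hscal : l * 0 + (1 - l) * τ₁ = s := by
            rw [hl]; field_simp; ring
          have hy : Xp s = l • Xp 0 + (1 - l) • Xp τ₁ := by
            rw [hXp]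
            show x₀ + s • (x - x₀) = _
            rw [Xp_comb, hscal]
          exact conv_down_lt hf p₁ ⟨hlpos, hlone⟩ hy hlt0
            (htop p₁ 0 le_rfl zero_le_one)
      rw [hX0] at hlt
      have : phi f p₁ (Xp s) = phi f p₁ x₀ := by
        simp only [phi]; rw [heq]
      rw [this] at hlt
      exact absurd hlt (lt_irrefl _)
    -- P predicate
    set P : (Z →L[ℝ] ℝ) → ℝ → Prop :=
      fun p s => ∃ τ : ℝ, 0 < τ ∧ τ < s ∧ phi f p (Xp τ) < phi f p (Xp s) with hP
    have hPall : ∀ s : ℝ, 0 < s → s ≤ τ₁ → ∃ p ∈ M, P p s := by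
      intro s h0 h1
      exact hstepB s h0 (h1.trans hτ₁1.le) (hSsmall s h0 h1)
    -- pigeonhole
    have hq : ∃ q ∈ M, ∀ ε : ℝ, 0 < ε → ∃ s, s ∈ Ioc (0:ℝ) (min ε τ₁) ∧ P q s := by
      by_contra hcon
      push_neg at hcon
      choose! εf hεpos hbad using hcon
      have hMne : M.Nonempty := ⟨p₁, hp₁M⟩
      have hFne : hMfin.toFinset.Nonempty := by
        rwa [Set.Finite.toFinset_nonempty]
      set ε₀ := hMfin.toFinset.inf' hFne εf with hε₀
      have hε₀pos : 0 < ε₀ := by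
        rw [hε₀, Finset.lt_inf'_iff]
        intro q hqF
        exact hεpos q (hMfin.mem_toFinset.1 hqF)
      set s := min ε₀ τ₁ with hs
      have hspos : 0 < s := lt_min hε₀pos hτ₁0
      obtain ⟨p, hpM, hPp⟩ := hPall s hspos (min_le_right _ _)
      have hsle : s ≤ min (εf p) τ₁ := by
        apply le_min _ (min_le_right _ _)
        exact le_trans (min_le_left _ _) (Finset.inf'_le εf (hMfin.mem_toFinset.2 hpM))
      exact hbad p hpM s ⟨hspos, hsle⟩ hPp
    obtain ⟨q, hqM, hq⟩ := hq
    -- strict monotonicity helper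
    have hmid : ∀ s t : ℝ, 0 < s → s < t → t ≤ 1 → P q s →
        phi f q (Xp s) < phi f q (Xp t) := by
      intro s t hs0 hst ht1 hPs
      obtain ⟨τ, hτ0, hτs, hτlt⟩ := hPs
      set l := (t - s) / (t - τ) with hl
      have htτ : 0 < t - τ := by linarith
      have hlpos : 0 < l := div_pos (by linarith) htτ
      have hlone : l < 1 := by rw [hl, div_lt_one htτ]; linarith
      have hscal : l * τ + (1 - l) * t = s := by
        rw [hl]; field_simp; ring
      have hy : Xp s = l • Xp τ + (1 - l) • Xp t := by
        rw [hXp]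
        show x₀ + s • (x - x₀) = _
        rw [Xp_comb, hscal]
      exact conv_mid_lt hf q ⟨hlpos, hlone⟩ hy hτlt
        (htop q s hs0.le (hst.le.trans ht1))
    -- upward closure: P q holds on all of (0,1]
    have hPone : ∀ t : ℝ, 0 < t → t ≤ 1 → P q t := by
      intro t ht0 ht1
      obtain ⟨s, hsmem, hPs⟩ := hq t ht0
      have hs0 : 0 < s := hsmem.1
      have hst : s ≤ t := le_trans hsmem.2 (min_le_left _ _)
      rcases eq_or_lt_of_le hst with he | hlt
      · rwa [← he]
      · obtain ⟨τ, hτ0, hτs, hτlt⟩ := hPs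
        have hsτ1 : s ≤ τ₁ := le_trans hsmem.2 (min_le_right _ _)
        have := hmid s t hs0 hlt ht1 ⟨τ, hτ0, hτs, hτlt⟩
        exact ⟨τ, hτ0, hτs.trans hlt, hτlt.trans this⟩
    have hsm : ∀ s t : ℝ, 0 < s → s < t → t ≤ 1 → phi f q (Xp s) < phi f q (Xp t) := by
      intro s t hs0 hst ht1
      exact hmid s t hs0 hst ht1 (hPone s hs0 (hst.le.trans ht1))
    -- final contradiction via lsc
    have hhalf : phi f q (Xp (1/2)) < phi f q (Xp 0) := by
      refine lt_of_lt_of_le (hsm (1/2) 1 (by norm_num) (by norm_num) le_rfl) ?_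
      rw [hX0]; exact hmono_phi q 1 zero_le_one le_rfl
    obtain ⟨r, hr1, hr2⟩ := EReal.exists_between_coe_real hhalf
    rw [hX0] at hr2
    obtain ⟨t₀, ht₀mem, hlow⟩ := hlsc x q hqM r hr2
    set t := min t₀ (1/2) / 2 with ht
    have ht0 : 0 < t := by
      rw [ht]; have := ht₀mem.1; positivity
    have htlt₀ : t < t₀ := by
      rw [ht]
      have h1 : min t₀ (1/2) ≤ t₀ := min_le_left _ _
      have := ht₀mem.1
      linarith [min_le_left t₀ (1/2 : ℝ)]
    have hthalf : t < 1/2 := by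
      rw [ht]
      have h1 : min t₀ (1/2) ≤ 1/2 := min_le_right _ _
      linarith
    have h1 : (r : EReal) < phi f q (Xp t) := hlow t ⟨ht0.le, htlt₀⟩
    have h2 : phi f q (Xp t) < phi f q (Xp (1/2)) := hsm t (1/2) ht0 hthalf (by norm_num)
    exact absurd (h1.trans (h2.trans hr1)) (lt_irrefl _)
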